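/- Let A be a GF(q)-subspace of GF(q^m) of dimension α and let T be a GF(q)-subspace of dimension t (possibly t = 0) such that dim⟨AT⟩ = α·t. Let β be a nonnegative integer with α(t + β) ≤ m. Then the number of β-tuples (b₁, …, b_β) ∈ (GF(q^m))^β such that, setting B = T + span_{GF(q)}{b₁, …, b_β}, one has dim⟨AB⟩ < α(t + β), is at most q^{mβ} · (1/(q-1)) · (q^{α(t+β)-m} − q^{αt−m}). -/

import Mathlib

open Module Submodule Finset


lemma aux_sigma {K : Type} [Fintype K] {n : ℕ} (Q : (Fin (n + 1) → K) → Prop) :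
    Nat.card {b : Fin (n + 1) → K // Q b} =
      ∑ x : K, Nat.card {r : Fin n → K // Q (Fin.cons x r)} := by
  classical
  have e : {b : Fin (n + 1) → K // Q b} ≃ Σ x : K, {r : Fin n → K // Q (Fin.cons x r)} :=
    { toFun := fun b => ⟨b.1 0, Fin.tail b.1, by
        rw [Fin.cons_self_tail]; exact b.2⟩
      invFun := fun p => ⟨Fin.cons p.1 p.2.1, p.2.2⟩
      left_inv := fun b => Subtype.ext (Fin.cons_self_tail b.1)
      right_inv := fun p => rfl }
  rw [Nat.card_congr e, Nat.card_eq_fintype_card, Fintype.card_sigma]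
  exact Finset.sum_congr rfl fun x _ => (Nat.card_eq_fintype_card).symm

section
set_option linter.unusedSectionVars false
set_option maxHeartbeats 1000000

variable {Fq K : Type} [Field Fq] [Fintype Fq] [Field K] [Algebra Fq K]
  [FiniteDimensional Fq K] [Fintype K]

lemma aux_mul_span_singleton (A : Submodule Fq K) (x : K) :
    A * span Fq {x} = A.map (LinearMap.mulRight Fq x) := by
  ext y
  simp [Submodule.mem_mul_span_singleton, Submodule.mem_map]

lemma aux_dim_le (A B : Submodule Fq K) (x : K) :
    finrank Fq ↥(A * (B ⊔ span Fq {x})) ≤ finrank Fq ↥(A * B) + finrank Fq ↥A := by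
  rw [Submodule.mul_sup, aux_mul_span_singleton]
  have h1 := Submodule.finrank_sup_add_finrank_inf_eq (A * B) (A.map (LinearMap.mulRight Fq x))
  have h2 : finrank Fq ↥(A.map (LinearMap.mulRight Fq x)) ≤ finrank Fq ↥A :=
    Submodule.finrank_map_le _ _
  omega

lemma aux_claim (A B : Submodule Fq K) (x : K)
    (h : finrank Fq ↥(A * (B ⊔ span Fq {x})) < finrank Fq ↥(A * B) + finrank Fq ↥A) :
    ∃ a ∈ A, a ≠ 0 ∧ a * x ∈ A * B := by
  by_cases hx : x = 0
  · subst hx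
    rw [Submodule.span_zero_singleton, sup_bot_eq] at h
    have hA : A ≠ ⊥ := by
      rintro rfl
      simp [finrank_bot] at h
    obtain ⟨a, ha, ha0⟩ := Submodule.exists_mem_ne_zero_of_ne_bot hA
    exact ⟨a, ha, ha0, by simp⟩
  · rw [Submodule.mul_sup, aux_mul_span_singleton] at h
    set W := A.map (LinearMap.mulRight Fq x) with hW
    have hinj : Function.Injective (LinearMap.mulRight Fq x) := fun a b hab => by
      simpa [hx] using mul_right_cancel₀ hx hab
    have hWd : finrank Fq ↥W = finrank Fq ↥A :=
      ((Submodule.equivMapOfInjective _ hinj A).finrank_eq).symm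
    have h1 := Submodule.finrank_sup_add_finrank_inf_eq (A * B) W
    have hne : A * B ⊓ W ≠ ⊥ := by
      intro hb
      rw [hb, finrank_bot] at h1
      omega
    obtain ⟨y, hy, hy0⟩ := Submodule.exists_mem_ne_zero_of_ne_bot hne
    obtain ⟨hy1, hy2⟩ := Submodule.mem_inf.mp hy
    obtain ⟨a, ha, rfl⟩ := Submodule.mem_map.mp hy2
    refine ⟨a, ha, ?_, hy1⟩
    rintro rfl
    simp at hy0

lemma aux_card_submodule (W : Submodule Fq K) [DecidablePred (· ∈ W)] :
    (univ.filter (· ∈ W)).card = Fintype.card Fq ^ finrank Fq ↥W := by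
  rw [← Fintype.card_subtype]
  have : Fintype.card {x // x ∈ W} = Fintype.card ↥W := Fintype.card_congr (Equiv.refl _)
  rw [this, card_eq_pow_finrank (K := Fq) (V := ↥W)]

lemma aux_step (A B : Submodule Fq K) :
    Nat.card {b : K // finrank Fq ↥(A * (B ⊔ span Fq {b})) <
        finrank Fq ↥(A * B) + finrank Fq ↥A} * (Fintype.card Fq - 1) ≤
      (Fintype.card Fq ^ finrank Fq ↥A - 1) * Fintype.card Fq ^ finrank Fq ↥(A * B) := by
  classical
  set q := Fintype.card Fq with hq
  set S : Finset K := univ.filter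
    (fun b => finrank Fq ↥(A * (B ⊔ span Fq {b})) < finrank Fq ↥(A * B) + finrank Fq ↥A) with hS
  have hcard : Nat.card {b : K // finrank Fq ↥(A * (B ⊔ span Fq {b})) <
      finrank Fq ↥(A * B) + finrank Fq ↥A} = S.card := by
    rw [Nat.card_eq_fintype_card, Fintype.card_subtype]
  rw [hcard]
  set P : Finset (K × K) :=
    ((univ.filter (· ∈ A)).erase 0) ×ˢ (univ.filter (· ∈ A * B)) with hP
  have hPcard : P.card = (q ^ finrank Fq ↥A - 1) * q ^ finrank Fq ↥(A * B) := by
    rw [hP, Finset.card_product, Finset.card_erase_of_mem (by simp [Submodule.zero_mem]),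
      aux_card_submodule, aux_card_submodule]
  rw [← hPcard]
  have key := Finset.card_mul_le_card_mul (fun (b : K) (p : K × K) => p.1 * b = p.2)
    (s := S) (t := P) (m := q - 1) (n := 1) ?_ ?_
  · simpa using key
  · -- lower bound on fibers
    intro b hb
    rw [hS, Finset.mem_filter] at hb
    obtain ⟨a₀, ha₀A, ha₀0, ha₀b⟩ := aux_claim A B b hb.2
    set Λ : Finset K := (univ.image (algebraMap Fq K)).erase 0 with hΛ
    have hΛcard : Λ.card = q - 1 := by
      rw [hΛ, Finset.card_erase_of_mem
        (Finset.mem_image.mpr ⟨0, Finset.mem_univ _, map_zero _⟩),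
        Finset.card_image_of_injective _ (algebraMap Fq K).injective, Finset.card_univ]
    rw [← hΛcard]
    refine Finset.card_le_card_of_injOn (fun l => (l * a₀, l * (a₀ * b))) ?_ ?_
    · intro l hl
      rw [hΛ, Finset.mem_coe, Finset.mem_erase, Finset.mem_image] at hl
      obtain ⟨hl0, μ, _, rfl⟩ := hl
      rw [Finset.mem_coe, Finset.mem_bipartiteAbove]
      refine ⟨?_, by ring⟩
      rw [hP, Finset.mem_product]
      have e1 : algebraMap Fq K μ * a₀ = μ • a₀ := (Algebra.smul_def μ a₀).symm
      have e2 : algebraMap Fq K μ * (a₀ * b) = μ • (a₀ * b) := (Algebra.smul_def μ _).symm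
      refine ⟨Finset.mem_erase.mpr ⟨mul_ne_zero hl0 ha₀0, by
          simp [e1, A.smul_mem μ ha₀A]⟩, by
          simp [e2, Submodule.smul_mem _ μ ha₀b]⟩
    · intro l hl l' hl' hee
      have := congrArg Prod.fst hee
      exact mul_right_cancel₀ ha₀0 this
  · intro p hp
    rw [hP, Finset.mem_product, Finset.mem_erase] at hp
    refine le_trans (Finset.card_le_one.mpr ?_) le_rfl
    intro b hb b' hb'
    rw [Finset.mem_bipartiteBelow] at hb hb'
    exact mul_left_cancel₀ hp.1.1 (hb.2.trans hb'.2.symm)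
lemma aux_main (A : Submodule Fq K) (n : ℕ) :
    ∀ (s : ℕ) (B : Submodule Fq K), finrank Fq ↥(A * B) = finrank Fq ↥A * s →
    Fintype.card K * ((Fintype.card Fq - 1) *
        Nat.card {b : Fin n → K // finrank Fq ↥(A * (B ⊔ span Fq (Set.range b))) <
          finrank Fq ↥A * (s + n)})
      + Fintype.card K ^ n * Fintype.card Fq ^ (finrank Fq ↥A * s)
      ≤ Fintype.card K ^ n * Fintype.card Fq ^ (finrank Fq ↥A * (s + n)) := by
  classical
  induction n with
  | zero =>
    intro s B hB
    have he : IsEmpty {b : Fin 0 → K // finrank Fq ↥(A * (B ⊔ span Fq (Set.range b))) <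
        finrank Fq ↥A * (s + 0)} := by
      constructor; rintro ⟨b, hb⟩
      rw [Set.range_eq_empty, Submodule.span_empty, sup_bot_eq, hB, Nat.add_zero] at hb
      omega
    rw [Nat.card_of_isEmpty]
    simp
  | succ n ih =>
    intro s B hB
    set α := finrank Fq ↥A with hα
    set q := Fintype.card Fq with hqdef
    set c := Fintype.card K with hcdef
    rw [aux_sigma]
    -- rewrite each summand
    have hpred : ∀ (x : K) (r : Fin n → K),
        A * (B ⊔ span Fq (Set.range (Fin.cons x r))) =
        A * ((B ⊔ span Fq {x}) ⊔ span Fq (Set.range r)) := by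
      intro x r
      rw [Fin.range_cons, Submodule.span_insert, ← sup_assoc]
    have hNre : ∀ x : K,
        Nat.card {r : Fin n → K //
          finrank Fq ↥(A * (B ⊔ span Fq (Set.range (Fin.cons x r)))) < α * (s + (n + 1))} =
        Nat.card {r : Fin n → K //
          finrank Fq ↥(A * ((B ⊔ span Fq {x}) ⊔ span Fq (Set.range r))) < α * ((s + 1) + n)} := by
      intro x
      exact Nat.card_congr (Equiv.subtypeEquivRight fun r => by
        rw [hpred x r, show α * ((s + 1) + n) = α * (s + (n + 1)) by ring])
    simp only [hNre]
    set N : K → ℕ := fun x =>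
      Nat.card {r : Fin n → K //
        finrank Fq ↥(A * ((B ⊔ span Fq {x}) ⊔ span Fq (Set.range r))) < α * ((s + 1) + n)}
      with hN
    -- the bad set
    set D : Finset K := univ.filter (fun x : K => finrank Fq ↥(A * (B ⊔ span Fq {x})) < α * (s + 1))
      with hD
    -- bad x: crude bound on N x
    have hbad1 : ∀ x : K, N x ≤ c ^ n := by
      intro x
      have h1 : N x ≤ Nat.card (Fin n → K) :=
        Nat.card_le_card_of_injective Subtype.val Subtype.val_injective
      have h2 : Nat.card (Fin n → K) = c ^ n := by
        simp [Nat.card_eq_fintype_card, hcdef]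
      omega
    -- bad count
    have hbad2 : D.card * (q - 1) ≤ (q ^ α - 1) * q ^ (α * s) := by
      have h := aux_step A B
      rw [hB, show α * s + α = α * (s + 1) from by ring, Nat.card_eq_fintype_card,
        Fintype.card_subtype] at h
      exact h
    -- good x
    have hgood : ∀ x ∈ Dᶜ, c * ((q - 1) * N x) + c ^ n * q ^ (α * (s + 1))
        ≤ c ^ n * q ^ (α * ((s + 1) + n)) := by
      intro x hx
      rw [Finset.mem_compl, hD, Finset.mem_filter] at hx
      have h1 : finrank Fq ↥(A * (B ⊔ span Fq {x})) ≤ α * (s + 1) := by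
        have := aux_dim_le A B x
        rw [hB] at this
        calc finrank Fq ↥(A * (B ⊔ span Fq {x})) ≤ α * s + α := this
          _ = α * (s + 1) := by ring
      have h2 : finrank Fq ↥(A * (B ⊔ span Fq {x})) = α * (s + 1) := by
        rcases lt_or_eq_of_le h1 with h | h
        · exact absurd h (by simpa using hx)
        · exact h
      exact ih (s + 1) (B ⊔ span Fq {x}) h2
    -- split the sum
    rw [← Finset.sum_filter_add_sum_filter_not univ
      (fun x : K => finrank Fq ↥(A * (B ⊔ span Fq {x})) < α * (s + 1)) N]
    have hsplit : (univ.filter (fun x : K => ¬ finrank Fq ↥(A * (B ⊔ span Fq {x})) < α * (s + 1)))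
        = Dᶜ := by
      rw [hD, Finset.compl_filter]
    rw [hsplit]
    set X : ℕ := ∑ x ∈ Dᶜ, N x with hX
    set Y : ℕ := ∑ x ∈ D, N x with hY
    have hYle : Y ≤ D.card * c ^ n := by
      rw [hY]
      calc ∑ x ∈ D, N x ≤ ∑ _x ∈ D, c ^ n := Finset.sum_le_sum fun x _ => hbad1 x
        _ = D.card * c ^ n := by rw [Finset.sum_const, smul_eq_mul]
    have hXle : c * ((q - 1) * X) + Dᶜ.card * (c ^ n * q ^ (α * (s + 1)))
        ≤ Dᶜ.card * (c ^ n * q ^ (α * ((s + 1) + n))) := by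
      calc c * ((q - 1) * X) + Dᶜ.card * (c ^ n * q ^ (α * (s + 1)))
          = ∑ x ∈ Dᶜ, (c * ((q - 1) * N x) + c ^ n * q ^ (α * (s + 1))) := by
            rw [Finset.sum_add_distrib, Finset.sum_const, smul_eq_mul, hX, Finset.mul_sum,
              Finset.mul_sum]
        _ ≤ ∑ _x ∈ Dᶜ, c ^ n * q ^ (α * ((s + 1) + n)) := Finset.sum_le_sum hgood
        _ = Dᶜ.card * (c ^ n * q ^ (α * ((s + 1) + n))) := by
            rw [Finset.sum_const, smul_eq_mul]
    -- final arithmetic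
    have hcd : D.card + Dᶜ.card = c := by
      rw [Finset.card_add_card_compl]
    have hq1 : 1 ≤ q := Fintype.card_pos
    have hqα : 1 ≤ q ^ α := Nat.one_le_pow _ _ hq1
    have hE : q ^ (α * (s + 1)) ≤ q ^ (α * ((s + 1) + n)) :=
      Nat.pow_le_pow_right hq1 (Nat.mul_le_mul_left _ (by omega))
    have hexp1 : α * ((s + 1) + n) = α * (s + (n + 1)) := by ring
    have hexp2 : q ^ (α * (s + 1)) = q ^ α * q ^ (α * s) := by
      rw [← pow_add]; ring_nf
    rw [hexp1] at hXle hE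
    rw [pow_succ]
    -- cast to integers
    zify [hq1, hqα] at hbad2 hYle hXle hE hexp2 ⊢
    have hq1' : (1:ℤ) ≤ (q:ℤ) := by exact_mod_cast hq1
    have hcd' : (D.card : ℤ) + (Dᶜ.card : ℤ) = (c : ℤ) := by exact_mod_cast hcd
    have h1 := mul_le_mul_of_nonneg_left hYle
      (mul_nonneg (Int.natCast_nonneg c) (by linarith : (0:ℤ) ≤ (q:ℤ) - 1))
    have h2 := mul_le_mul_of_nonneg_left hbad2
      (mul_nonneg (by positivity : (0:ℤ) ≤ (c:ℤ) ^ n) (Int.natCast_nonneg c))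
    have h3 := mul_le_mul_of_nonneg_left hE
      (mul_nonneg (by positivity : (0:ℤ) ≤ (c:ℤ) ^ n) (Int.natCast_nonneg D.card))
    have h4 : (c:ℤ) ^ n * (q:ℤ) ^ (α * (s + 1)) * (#D) +
        (c:ℤ) ^ n * (q:ℤ) ^ (α * (s + 1)) * (#Dᶜ) =
        (c:ℤ) ^ n * (q:ℤ) ^ (α * (s + 1)) * c := by
      linear_combination ((c:ℤ) ^ n * (q:ℤ) ^ (α * (s + 1))) * hcd'
    have h5 : (c:ℤ) ^ n * (c:ℤ) * (q:ℤ) ^ (α * (s + 1)) =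
        (c:ℤ) ^ n * (c:ℤ) * ((q:ℤ) ^ α * (q:ℤ) ^ (α * s)) := by
      linear_combination ((c:ℤ) ^ n * (c:ℤ)) * hexp2
    have h6 : (c:ℤ) ^ n * (q:ℤ) ^ (α * (s + (n + 1))) * (#D) +
        (c:ℤ) ^ n * (q:ℤ) ^ (α * (s + (n + 1))) * (#Dᶜ) =
        (c:ℤ) ^ n * (q:ℤ) ^ (α * (s + (n + 1))) * c := by
      linear_combination ((c:ℤ) ^ n * (q:ℤ) ^ (α * (s + (n + 1)))) * hcd'
    linarith [h1, h2, h3, hXle, h4, h5, h6]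

end

/-- sharper counting form of Lemma 2: Let `A` be a `GF(q)`-subspace of `GF(q^m)`
of dimension `α` and `T` a subspace of dimension `t` (possibly `t = 0`) with `dim⟨AT⟩ = α·t`.
Let `β ≥ 0` with `α(t+β) ≤ m`. Then the number of `β`-tuples `(b₁, …, b_β)` such that, setting
`B = T + span{b₁, …, b_β}`, one has `dim⟨AB⟩ < α(t+β)`, is at most
`q^{mβ} · (1/(q-1)) · (q^{α(t+β)-m} − q^{αt-m})` (integer exponents, possibly negative). -/
theorem count_non_full_product_tuples_sharp
    (q m α t β : ℕ) (hm : 0 < m)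
    (Fq K : Type) [Field Fq] [Fintype Fq] [Field K] [Algebra Fq K]
    (hq : Fintype.card Fq = q) (hK : Module.finrank Fq K = m)
    (A T : Submodule Fq K)
    (hA : Module.finrank Fq ↥A = α) (hT : Module.finrank Fq ↥T = t)
    (hAT : Module.finrank Fq ↥(A * T) = α * t)
    (hβ : α * (t + β) ≤ m) :
    (Nat.card {b : Fin β → K //
        Module.finrank Fq ↥(A * (T ⊔ Submodule.span Fq (Set.range b))) < α * (t + β)} : ℚ) ≤
      (q : ℚ) ^ (m * β) * (1 / ((q : ℚ) - 1)) *
        ((q : ℚ) ^ ((α * (t + β) : ℤ) - (m : ℤ)) - (q : ℚ) ^ ((α * t : ℤ) - (m : ℤ))) := by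
  haveI : FiniteDimensional Fq K := Module.finite_of_finrank_pos (by rw [hK]; exact hm)
  haveI : Finite K := Module.finite_of_finite Fq
  haveI : Fintype K := Fintype.ofFinite K
  have hmain := aux_main A β t T (by rw [hAT, hA])
  have hc : Fintype.card K = q ^ m := by
    rw [card_eq_pow_finrank (K := Fq) (V := K), hK, hq]
  rw [hA, hq, hc] at hmain
  set Nc : ℕ := Nat.card {b : Fin β → K //
    Module.finrank Fq ↥(A * (T ⊔ Submodule.span Fq (Set.range b))) < α * (t + β)} with hNc
  have hq2 : 2 ≤ q := by rw [← hq]; exact Fintype.one_lt_card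
  qify [show 1 ≤ q from by omega] at hmain
  have hq0 : (0:ℚ) < (q:ℚ) := by positivity
  have hq1 : (1:ℚ) < (q:ℚ) := by exact_mod_cast hq2
  have e : ∀ a : ℕ, (q:ℚ) ^ ((a:ℤ) - (m:ℤ)) = (q:ℚ) ^ a / (q:ℚ) ^ m := fun a => by
    rw [zpow_sub₀ (ne_of_gt hq0), zpow_natCast, zpow_natCast]
  have g1 : ((α : ℤ) * ((t : ℤ) + (β : ℤ)) - (m : ℤ)) = ((α * (t + β) : ℕ) : ℤ) - (m : ℤ) := by
    push_cast; ring
  have g2 : ((α : ℤ) * (t : ℤ) - (m : ℤ)) = ((α * t : ℕ) : ℤ) - (m : ℤ) := by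
    push_cast; ring
  rw [show ((α * (t + β) : ℤ)) = (α : ℤ) * ((t : ℤ) + (β : ℤ)) from by push_cast; ring] at g1
  rw [g1, g2, e, e]
  have hrhs : (q : ℚ) ^ (m * β) * (1 / ((q : ℚ) - 1)) *
      ((q:ℚ) ^ (α * (t + β)) / (q:ℚ) ^ m - (q:ℚ) ^ (α * t) / (q:ℚ) ^ m) =
      ((q:ℚ) ^ (m * β) * ((q:ℚ) ^ (α * (t + β)) - (q:ℚ) ^ (α * t))) /
        (((q:ℚ) - 1) * (q:ℚ) ^ m) := by
    field_simp
  rw [hrhs, le_div_iff₀ (mul_pos (by linarith) (by positivity))]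
  have h1 : ((q:ℚ) ^ m) ^ β * (q:ℚ) ^ (α * (t + β)) =
      (q:ℚ) ^ (m * β) * (q:ℚ) ^ (α * (t + β)) := by rw [← pow_mul]
  have h2 : ((q:ℚ) ^ m) ^ β * (q:ℚ) ^ (α * t) =
      (q:ℚ) ^ (m * β) * (q:ℚ) ^ (α * t) := by rw [← pow_mul]
  nlinarith [hmain, h1, h2]
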